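/- Let K be a proper cone, c a unit vector in the interior of K ∩ K^*, and ‖·‖_K the cone-norm ‖x‖_K = inf{t>0 : x ∈ E_t K} where E_t = c c^T + t(I − c c^T). Then for all x, y with (x,c) > 0 and (y,c) > 0: ‖x + y‖_K ≤ ‖x‖_K + ‖y‖_K. -/
import Mathlib


open Matrix Set

def IsProperCone {d : ℕ} (K : Set (Fin d → ℝ)) : Prop :=
  IsClosed K ∧ Convex ℝ K ∧ (∀ x ∈ K, ∀ t : ℝ, 0 ≤ t → t • x ∈ K) ∧
    K ∩ (-K) = {0} ∧ (interior K).Nonempty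

def dualConeSet {d : ℕ} (K : Set (Fin d → ℝ)) : Set (Fin d → ℝ) :=
  {x | ∀ y ∈ K, 0 ≤ x ⬝ᵥ y}

noncomputable def Emat {d : ℕ} (c : Fin d → ℝ) (t : ℝ) : Matrix (Fin d) (Fin d) ℝ :=
  vecMulVec c c + t • (1 - vecMulVec c c)

/-- The cone-norm `‖x‖_K = inf {t > 0 : x ∈ E_t K}`. -/
noncomputable def coneNorm {d : ℕ} (K : Set (Fin d → ℝ)) (c : Fin d → ℝ)
    (x : Fin d → ℝ) : ℝ :=
  sInf {t : ℝ | 0 < t ∧ x ∈ (Emat c t).mulVec '' K}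

lemma Emat_mulVec {d : ℕ} (c : Fin d → ℝ) (t : ℝ) (v : Fin d → ℝ) :
    Emat c t *ᵥ v = (c ⬝ᵥ v) • c + t • (v - (c ⬝ᵥ v) • c) := by
  funext i
  simp [Emat, mulVec, vecMulVec, dotProduct, Finset.mul_sum, mul_add, mul_sub,
    Finset.sum_add_distrib, Finset.sum_sub_distrib, Matrix.one_apply, mul_comm, mul_left_comm]

/-- add-closedness of a convex cone -/
lemma cone_add_mem {d : ℕ} {K : Set (Fin d → ℝ)} (hK : IsProperCone K)
    {u v : Fin d → ℝ} (hu : u ∈ K) (hv : v ∈ K) : u + v ∈ K := by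
  have h := hK.2.1 hu hv (by norm_num : (0:ℝ) ≤ 1/2) (by norm_num : (0:ℝ) ≤ 1/2) (by norm_num)
  have h2 := hK.2.2.1 _ h 2 (by norm_num)
  have : (2:ℝ) • ((1/2:ℝ) • u + (1/2:ℝ) • v) = u + v := by
    match_scalars <;> norm_num
  rwa [this] at h2

/-- Nonemptiness of the defining set. -/
lemma coneNorm_set_nonempty {d : ℕ} {K : Set (Fin d → ℝ)} (hK : IsProperCone K)
    {c : Fin d → ℝ} (hc : c ⬝ᵥ c = 1) (hcint : c ∈ interior (K ∩ dualConeSet K))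
    {x : Fin d → ℝ} (hx : 0 < x ⬝ᵥ c) :
    {t : ℝ | 0 < t ∧ x ∈ (Emat c t).mulVec '' K}.Nonempty := by
  have hcx : 0 < c ⬝ᵥ x := by rwa [dotProduct_comm]
  set w : Fin d → ℝ := x - (c ⬝ᵥ x) • c with hw
  have hcK : c ∈ interior K := interior_mono inter_subset_left hcint
  -- find ε > 0 with c + ε • w ∈ K
  have hcont : Continuous fun ε : ℝ => c + ε • w := by continuity
  have hopen : IsOpen ((fun ε : ℝ => c + ε • w) ⁻¹' interior K) :=
    isOpen_interior.preimage hcont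
  have h0 : (0:ℝ) ∈ (fun ε : ℝ => c + ε • w) ⁻¹' interior K := by
    simp [hcK]
  obtain ⟨ε, hε, hεmem⟩ := Metric.isOpen_iff.mp hopen 0 h0
  have hball : (ε/2) ∈ (fun ε : ℝ => c + ε • w) ⁻¹' interior K := by
    apply hεmem
    simp only [Metric.mem_ball, Real.dist_eq, sub_zero, abs_of_pos (half_pos hε)]
    linarith
  set e := ε/2 with he
  have hepos : 0 < e := half_pos hε
  have hmemK : c + e • w ∈ K := interior_subset hball
  refine ⟨1/(e * (c ⬝ᵥ x)), ⟨by positivity, ?_⟩⟩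
  refine ⟨(c ⬝ᵥ x) • (c + e • w), hK.2.2.1 _ hmemK _ hcx.le, ?_⟩
  have hcw : c ⬝ᵥ w = 0 := by
    simp [hw, dotProduct_sub, dotProduct_smul, hc]
  have hdot : c ⬝ᵥ ((c ⬝ᵥ x) • (c + e • w)) = c ⬝ᵥ x := by
    simp [dotProduct_smul, dotProduct_add, hc, hcw]
  rw [Emat_mulVec, hdot]
  have hne : e * (c ⬝ᵥ x) ≠ 0 := by positivity
  have : x = (c ⬝ᵥ x) • c + w := by simp [hw]
  rw [this]
  match_scalars <;>
    · simp only [dotProduct_add, dotProduct_smul, smul_eq_mul, hc, hcw]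
      field_simp [hepos.ne', hcx.ne']
      try ring

/-- Triangle inequality for the cone-norm. -/
theorem coneNorm_triangle {d : ℕ} (K : Set (Fin d → ℝ))
    (hK : IsProperCone K) (c : Fin d → ℝ) (hc : c ⬝ᵥ c = 1)
    (hcint : c ∈ interior (K ∩ dualConeSet K))
    (x y : Fin d → ℝ) (hx : 0 < x ⬝ᵥ c) (hy : 0 < y ⬝ᵥ c) :
    coneNorm K c (x + y) ≤ coneNorm K c x + coneNorm K c y := by
  have hcx : 0 < c ⬝ᵥ x := by rwa [dotProduct_comm]
  have hcy : 0 < c ⬝ᵥ y := by rwa [dotProduct_comm]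
  have hcK : c ∈ K := (interior_subset hcint).1
  set Sx := {t : ℝ | 0 < t ∧ x ∈ (Emat c t).mulVec '' K} with hSx
  set Sy := {t : ℝ | 0 < t ∧ y ∈ (Emat c t).mulVec '' K} with hSy
  set Sxy := {t : ℝ | 0 < t ∧ x + y ∈ (Emat c t).mulVec '' K} with hSxy
  have hSxne : Sx.Nonempty := coneNorm_set_nonempty hK hc hcint hx
  have hSyne : Sy.Nonempty := coneNorm_set_nonempty hK hc hcint hy
  have hbdd : ∀ S : Set ℝ, (∀ t ∈ S, (0:ℝ) < t) → BddBelow S := by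
    intro S hS
    exact ⟨0, fun t ht => (hS t ht).le⟩
  have hbxy : BddBelow Sxy := hbdd _ (fun t ht => ht.1)
  -- main: t ∈ Sx, s ∈ Sy → t + s ∈ Sxy
  have key : ∀ t ∈ Sx, ∀ s ∈ Sy, t + s ∈ Sxy := by
    rintro t ⟨ht, a, haK, hax⟩ s ⟨hs, b, hbK, hby⟩
    have hT : 0 < t + s := by linarith
    have hTne : t + s ≠ 0 := hT.ne'
    have hca : c ⬝ᵥ a = c ⬝ᵥ x := by
      rw [← hax, Emat_mulVec]
      simp [dotProduct_add, dotProduct_smul, dotProduct_sub, hc]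
    have hcb : c ⬝ᵥ b = c ⬝ᵥ y := by
      rw [← hby, Emat_mulVec]
      simp [dotProduct_add, dotProduct_smul, dotProduct_sub, hc]
    refine ⟨hT, (t/(t+s)) • a + ((s/(t+s)) • b +
      ((s * (c ⬝ᵥ a) + t * (c ⬝ᵥ b))/(t+s)) • c), ?_, ?_⟩
    · refine cone_add_mem hK (hK.2.2.1 _ haK _ (by positivity)) (cone_add_mem hK
        (hK.2.2.1 _ hbK _ (by positivity)) (hK.2.2.1 _ hcK _ ?_))
      have : 0 < s * (c ⬝ᵥ a) + t * (c ⬝ᵥ b) := by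
        rw [hca, hcb]; positivity
      positivity
    · rw [Emat_mulVec]
      have hck : c ⬝ᵥ ((t/(t+s)) • a + ((s/(t+s)) • b +
          ((s * (c ⬝ᵥ a) + t * (c ⬝ᵥ b))/(t+s)) • c)) = c ⬝ᵥ a + c ⬝ᵥ b := by
        simp [dotProduct_add, dotProduct_smul, hc]
        field_simp
        ring
      rw [hck, ← hax, ← hby, Emat_mulVec, Emat_mulVec]
      match_scalars <;> field_simp <;> ring
  -- conclude
  have h1 : ∀ t ∈ Sx, ∀ s ∈ Sy, sInf Sxy ≤ t + s :=
    fun t ht s hs => csInf_le hbxy (key t ht s hs)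
  have h2 : ∀ t ∈ Sx, sInf Sxy - sInf Sy ≤ t := by
    intro t ht
    have : sInf Sxy - t ≤ sInf Sy :=
      le_csInf hSyne (fun s hs => by linarith [h1 t ht s hs])
    linarith
  have h3 : sInf Sxy - sInf Sy ≤ sInf Sx := le_csInf hSxne h2
  have : sInf Sxy ≤ sInf Sx + sInf Sy := by linarith
  exact this
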